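/- The maximal set of individuals who suffer from a violation of the Equality Code under the Over-and-Above rule with the original non-overlapping membership profile is uniquely defined, and equals Ĉ((ρ̊_{-J̄}, ρ̃_{J̄}); I) \ Ĉ(ρ̊; I) where J̄ = (𝒥 ∩ I) \ Ĉ(ρ̊; I). -/

import Mathlib

attribute [local instance] Classical.propDecidable

noncomputable section

variable {ι R : Type*} [Fintype ι] [DecidableEq ι] [Fintype R] [DecidableEq R]

/-- Eligibility sets: everyone is eligible for the open category (`none`),
and `elig c` is the set of members of VR-protected category `c`. -/
def eligOf (elig : R → Finset ι) : Option R → Finset ι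
  | none => (Finset.univ : Finset ι)
  | some c => elig c

/-- Aggregate choice: all individuals chosen across all categories. -/
def aggC (C : Finset ι → Option R → Finset ι) (I : Finset ι) : Finset ι :=
  Finset.univ.biUnion fun v => C I v

/-- `C` is a choice rule for capacities `q` and eligibility `elig`: each category chooses
eligible applicants up to capacity, and no individual is chosen by two categories. -/
def IsChoiceRule (q : Option R → ℕ) (elig : R → Finset ι)
    (C : Finset ι → Option R → Finset ι) : Prop :=
  ∀ I : Finset ι,
    (∀ v, C I v ⊆ I ∩ eligOf elig v) ∧
    (∀ v, (C I v).card ≤ q v) ∧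
    (∀ v v', v ≠ v' → Disjoint (C I v) (C I v'))

/-- Non-wastefulness: no position remains idle while an eligible applicant is unchosen. -/
def NonWasteful (q : Option R → ℕ) (elig : R → Finset ι)
    (C : Finset ι → Option R → Finset ι) : Prop :=
  ∀ (I : Finset ι) (v : Option R) (j : ι),
    j ∈ I → j ∉ aggC C I → (C I v).card < q v → j ∉ eligOf elig v

/-- No justified envy: a chosen individual outscores every eligible entirely-unchosen applicant. -/
def NoJustifiedEnvy (σ : ι → ℝ) (elig : R → Finset ι)
    (C : Finset ι → Option R → Finset ι) : Prop :=
  ∀ (I : Finset ι) (v : Option R) (i j : ι),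
    i ∈ C I v → j ∈ I → j ∈ eligOf elig v → j ∉ aggC C I → σ j < σ i

/-- Compliance with VR protections: a VR recipient implies the open category is full, with
every open-category recipient scoring strictly higher. -/
def CompliesVR (σ : ι → ℝ) (q : Option R → ℕ)
    (C : Finset ι → Option R → Finset ι) : Prop :=
  ∀ (I : Finset ι) (c : R) (i : ι), i ∈ C I (some c) →
    (C I none).card = q none ∧ ∀ j ∈ C I none, σ i < σ j

/-- The (at most) `k` highest merit-score members of `S`. -/
def topK (σ : ι → ℝ) (S : Finset ι) (k : ℕ) : Finset ι :=
  S.filter fun i => (S.filter fun j => σ i ≤ σ j).card ≤ k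

/-- The Over-and-Above choice rule: open positions go to the top-merit applicants; then each
VR category's quota is filled by the highest-merit remaining eligible members. -/
def OA (σ : ι → ℝ) (q : Option R → ℕ) (elig : R → Finset ι)
    (I : Finset ι) : Option R → Finset ι
  | none => topK σ I (q none)
  | some c => topK σ ((I \ topK σ I (q none)) ∩ elig c) (q (some c))

/-- Eligibility sets induced by a membership profile `ρ`. -/
def eligρ (ρ : ι → Finset R) (c : R) : Finset ι :=
  Finset.univ.filter fun i => c ∈ ρ i

/-- Aggregate outcome of the Over-and-Above rule under membership profile `ρ`. -/
def aggOA (σ : ι → ℝ) (q : Option R → ℕ) (ρ : ι → Finset R) (I : Finset ι) : Finset ι :=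
  aggC (OA σ q (eligρ ρ)) I

/-- The profile `(ρ₋ⱼ, ρ̃ⱼ)`: each member of `J` is reassigned membership `{e}` only. -/
def updProf (ρ : ι → Finset R) (e : R) (J : Finset ι) : ι → Finset R :=
  fun i => if i ∈ J then {e} else ρ i

/-- `J ⊆ 𝒥 ∩ I` suffers from a violation of the Equality Code under the Over-and-Above rule
with profile `ρ` for `I`: every member of `J` is unchosen under `ρ` but chosen once the
members of `J` are reassigned membership `{e}`. -/
def Suffers (σ : ι → ℝ) (q : Option R → ℕ) (ρ : ι → Finset R) (e : R)
    (JJ I J : Finset ι) : Prop :=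
  J ⊆ JJ ∩ I ∧ ∀ j ∈ J, j ∉ aggOA σ q ρ I ∧ j ∈ aggOA σ q (updProf ρ e J) I

/-- `J` is a maximal set of individuals suffering from a violation of the Equality Code. -/
def MaximalSuffers (σ : ι → ℝ) (q : Option R → ℕ) (ρ : ι → Finset R) (e : R)
    (JJ I J : Finset ι) : Prop :=
  J ⊆ (JJ ∩ I) \ aggOA σ q ρ I ∧
  Suffers σ q ρ e JJ I J ∧
  ∀ J' ⊆ (JJ ∩ I) \ aggOA σ q ρ I, J ⊂ J' →
    ¬ Suffers σ q ρ e JJ I J' ∧ J ⊆ aggOA σ q (updProf ρ e J') I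

/-! ### Auxiliary lemmas -/

section Aux

variable {σ : ι → ℝ}

lemma mem_topK' {S : Finset ι} {k : ℕ} {i : ι} :
    i ∈ topK σ S k ↔ i ∈ S ∧ (S.filter fun j => σ i ≤ σ j).card ≤ k :=
  Finset.mem_filter

lemma topK_subset' (σ : ι → ℝ) (S : Finset ι) (k : ℕ) : topK σ S k ⊆ S :=
  Finset.filter_subset _ _

lemma mem_topK_of_subset {S S' : Finset ι} {k : ℕ} {i : ι}
    (h : S' ⊆ S) (hi : i ∈ S') (ht : i ∈ topK σ S k) : i ∈ topK σ S' k := by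
  rw [mem_topK'] at ht ⊢
  refine ⟨hi, le_trans (Finset.card_le_card ?_) ht.2⟩
  intro j hj
  simp only [Finset.mem_filter] at hj ⊢
  exact ⟨h hj.1, hj.2⟩

lemma rank_lt_rank {S : Finset ι} {i₁ i₂ : ι} (h1 : i₁ ∈ S) (h : σ i₁ < σ i₂) :
    (S.filter fun j => σ i₂ ≤ σ j).card < (S.filter fun j => σ i₁ ≤ σ j).card := by
  apply Finset.card_lt_card
  constructor
  · intro j hj
    simp only [Finset.mem_filter] at hj ⊢
    exact ⟨hj.1, h.le.trans hj.2⟩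
  · intro hsub
    have h2 := hsub (Finset.mem_filter.mpr ⟨h1, le_refl _⟩)
    simp only [Finset.mem_filter] at h2
    exact absurd h2.2 (not_le.mpr h)

lemma card_topK (hσ : Function.Injective σ) (S : Finset ι) (k : ℕ) :
    (topK σ S k).card = min k S.card := by
  classical
  set f : ι → ℕ := fun i => (S.filter fun j => σ i ≤ σ j).card with hf
  have hinj : Set.InjOn f S := by
    intro i₁ h₁ i₂ h₂ he
    by_contra hne
    rcases lt_trichotomy (σ i₁) (σ i₂) with h | h | h
    · exact absurd he (ne_of_gt (rank_lt_rank h₁ h))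
    · exact hne (hσ h)
    · exact absurd he (ne_of_lt (rank_lt_rank h₂ h))
  have himg : S.image f = Finset.Icc 1 S.card := by
    apply Finset.eq_of_subset_of_card_le
    · intro m hm
      simp only [Finset.mem_image] at hm
      obtain ⟨i, hi, rfl⟩ := hm
      rw [Finset.mem_Icc]
      exact ⟨Finset.card_pos.mpr ⟨i, Finset.mem_filter.mpr ⟨hi, le_refl _⟩⟩,
        Finset.card_filter_le _ _⟩
    · rw [Finset.card_image_of_injOn hinj, Nat.card_Icc]
      omega
  have htk : topK σ S k = S.filter fun i => f i ≤ k := rfl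
  have hci : (S.filter fun i => f i ≤ k).card
      = ((S.filter fun i => f i ≤ k).image f).card :=
    (Finset.card_image_of_injOn (hinj.mono (Finset.filter_subset _ _))).symm
  have himf : (S.filter fun i => f i ≤ k).image f = (S.image f).filter fun m => m ≤ k := by
    ext m
    simp only [Finset.mem_image, Finset.mem_filter]
    constructor
    · rintro ⟨i, ⟨hi, hik⟩, rfl⟩
      exact ⟨⟨i, hi, rfl⟩, hik⟩
    · rintro ⟨⟨i, hi, rfl⟩, hm⟩
      exact ⟨i, ⟨hi, hm⟩, rfl⟩
  rw [htk, hci, himf, himg]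
  have : (Finset.Icc 1 S.card).filter (fun m => m ≤ k) = Finset.Icc 1 (min k S.card) := by
    ext m
    simp only [Finset.mem_filter, Finset.mem_Icc]
    omega
  rw [this, Nat.card_Icc]
  omega

lemma topK_eq_of_between (hσ : Function.Injective σ) {S S' : Finset ι} {k : ℕ}
    (h1 : topK σ S k ⊆ S') (h2 : S' ⊆ S) : topK σ S' k = topK σ S k := by
  apply Finset.Subset.antisymm
  · intro i hi
    by_contra hit
    have hiS' : i ∈ S' := topK_subset' σ S' k hi
    have hiS : i ∈ S := h2 hiS'
    have hrank : k < (S.filter fun j => σ i ≤ σ j).card := by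
      by_contra h
      exact hit (mem_topK'.mpr ⟨hiS, not_lt.mp h⟩)
    have hbeat : ∀ t ∈ topK σ S k, σ i < σ t := by
      intro t ht
      rcases lt_trichotomy (σ i) (σ t) with h | h | h
      · exact h
      · exact absurd ht (by rw [← hσ h]; exact hit)
      · exfalso
        have h3 := (mem_topK'.mp ht).2
        have hsub : (S.filter fun j => σ i ≤ σ j) ⊆ (S.filter fun j => σ t ≤ σ j) := by
          intro j hj
          simp only [Finset.mem_filter] at hj ⊢
          exact ⟨hj.1, h.le.trans hj.2⟩
        exact absurd ((Finset.card_le_card hsub).trans h3) (not_le.mpr hrank)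
    have hcard : (topK σ S k).card = k := by
      rw [card_topK hσ]
      have hk : k + 1 ≤ S.card := le_trans hrank (Finset.card_filter_le _ _)
      omega
    have hsub : insert i (topK σ S k) ⊆ S'.filter fun j => σ i ≤ σ j := by
      intro t ht
      rcases Finset.mem_insert.mp ht with rfl | ht
      · exact Finset.mem_filter.mpr ⟨hiS', le_refl _⟩
      · exact Finset.mem_filter.mpr ⟨h1 ht, (hbeat t ht).le⟩
    have hc2 : k + 1 ≤ (S'.filter fun j => σ i ≤ σ j).card := by
      have hcc := Finset.card_le_card hsub
      rwa [Finset.card_insert_of_notMem hit, hcard] at hcc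
    have h4 := (mem_topK'.mp hi).2
    omega
  · intro i hi
    exact mem_topK_of_subset h2 (h1 hi) hi

lemma mem_aggC {C : Finset ι → Option R → Finset ι} {I : Finset ι} {i : ι} :
    i ∈ aggC C I ↔ ∃ v, i ∈ C I v := by
  simp [aggC]

lemma OA_none (σ : ι → ℝ) (q : Option R → ℕ) (elig : R → Finset ι) (I : Finset ι) :
    OA σ q elig I none = topK σ I (q none) := rfl

lemma OA_some (σ : ι → ℝ) (q : Option R → ℕ) (elig : R → Finset ι) (I : Finset ι) (c : R) :
    OA σ q elig I (some c) = topK σ ((I \ topK σ I (q none)) ∩ elig c) (q (some c)) := rfl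

variable {q : Option R → ℕ} {ρ : ι → Finset R} {e : R} {I : Finset ι}

lemma eligρ_upd_ne {J : Finset ι} {c : R} (hc : c ≠ e) :
    eligρ (updProf ρ e J) c = eligρ ρ c \ J := by
  ext i
  simp only [eligρ, Finset.mem_filter, Finset.mem_univ, true_and, Finset.mem_sdiff]
  by_cases hi : i ∈ J <;> simp [updProf, hi, hc]

lemma eligρ_upd_e {J : Finset ι} :
    eligρ (updProf ρ e J) e = eligρ ρ e ∪ J := by
  ext i
  simp only [eligρ, Finset.mem_filter, Finset.mem_univ, true_and, Finset.mem_union]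
  by_cases hi : i ∈ J <;> simp [updProf, hi]

lemma OA_upd_ne (hσ : Function.Injective σ) {J : Finset ι}
    (hJA : ∀ j ∈ J, j ∉ aggOA σ q ρ I) {c : R} (hc : c ≠ e) :
    OA σ q (eligρ (updProf ρ e J)) I (some c) = OA σ q (eligρ ρ) I (some c) := by
  rw [OA_some, OA_some, eligρ_upd_ne hc]
  have hps : (I \ topK σ I (q none)) ∩ (eligρ ρ c \ J)
      = ((I \ topK σ I (q none)) ∩ eligρ ρ c) \ J := by
    ext x
    simp only [Finset.mem_inter, Finset.mem_sdiff]
    tauto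
  rw [hps]
  apply topK_eq_of_between hσ
  · intro t ht
    refine Finset.mem_sdiff.mpr ⟨topK_subset' _ _ _ ht, fun htJ => hJA t htJ ?_⟩
    exact mem_aggC.mpr ⟨some c, ht⟩
  · exact Finset.sdiff_subset

lemma OA_upd_e {J : Finset ι} (hJ : J ⊆ I \ topK σ I (q none)) :
    OA σ q (eligρ (updProf ρ e J)) I (some e)
      = topK σ (((I \ topK σ I (q none)) ∩ eligρ ρ e) ∪ J) (q (some e)) := by
  rw [OA_some, eligρ_upd_e]
  congr 1
  ext x
  simp only [Finset.mem_inter, Finset.mem_union]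
  constructor
  · rintro ⟨h1, h2 | h2⟩
    · exact Or.inl ⟨h1, h2⟩
    · exact Or.inr h2
  · rintro (⟨h1, h2⟩ | h2)
    · exact ⟨h1, Or.inl h2⟩
    · exact ⟨hJ h2, Or.inr h2⟩

lemma mem_agg_upd (hσ : Function.Injective σ) {J : Finset ι} {i : ι}
    (hJA : ∀ j ∈ J, j ∉ aggOA σ q ρ I) (hJI : J ⊆ I)
    (hiA : i ∉ aggOA σ q ρ I) :
    i ∈ aggOA σ q (updProf ρ e J) I
      ↔ i ∈ topK σ (((I \ topK σ I (q none)) ∩ eligρ ρ e) ∪ J) (q (some e)) := by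
  have hJ : J ⊆ I \ topK σ I (q none) := by
    intro j hj
    refine Finset.mem_sdiff.mpr ⟨hJI hj, fun hT => hJA j hj ?_⟩
    exact mem_aggC.mpr ⟨none, by rw [OA_none]; exact hT⟩
  constructor
  · intro h
    obtain ⟨v, hv⟩ := mem_aggC.mp h
    cases v with
    | none =>
      rw [OA_none] at hv
      exact absurd (mem_aggC.mpr ⟨none, by rw [OA_none]; exact hv⟩) hiA
    | some c =>
      by_cases hc : c = e
      · subst hc
        rwa [OA_upd_e hJ] at hv
      · rw [OA_upd_ne hσ hJA hc] at hv
        exact absurd (mem_aggC.mpr ⟨some c, hv⟩) hiA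
  · intro h
    exact mem_aggC.mpr ⟨some e, by rw [OA_upd_e hJ]; exact h⟩

end Aux

/-- under the original non-overlapping profile, the maximal set of individuals
suffering from a violation of the Equality Code is uniquely defined and equals
`Ĉ((ρ̊₋J̄, ρ̃J̄); I) \ Ĉ(ρ̊; I)` where `J̄ = (𝒥 ∩ I) \ Ĉ(ρ̊; I)`. -/
theorem maximal_suffers_unique (σ : ι → ℝ) (hσ : Function.Injective σ)
    (q : Option R → ℕ) (ρ : ι → Finset R) (hρ : ∀ i, (ρ i).card ≤ 1) (e : R)
    (JJ : Finset ι) (hJJ : ∀ j ∈ JJ, (ρ j).Nonempty ∧ e ∉ ρ j) :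
    ∀ I : Finset ι,
      MaximalSuffers σ q ρ e JJ I
        (aggOA σ q (updProf ρ e ((JJ ∩ I) \ aggOA σ q ρ I)) I \ aggOA σ q ρ I) ∧
      ∀ J : Finset ι, MaximalSuffers σ q ρ e JJ I J →
        J = aggOA σ q (updProf ρ e ((JJ ∩ I) \ aggOA σ q ρ I)) I \ aggOA σ q ρ I := by
  intro I
  set A := aggOA σ q ρ I with hA
  set Jb := (JJ ∩ I) \ A with hJbdef
  set P := (I \ topK σ I (q none)) ∩ eligρ ρ e with hP
  set B := topK σ (P ∪ Jb) (q (some e)) with hB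
  have hJbA : ∀ j ∈ Jb, j ∉ A := fun j hj => (Finset.mem_sdiff.mp hj).2
  have hJbI : Jb ⊆ I := fun j hj => (Finset.mem_inter.mp (Finset.mem_sdiff.mp hj).1).2
  have hPA : topK σ P (q (some e)) ⊆ A := by
    intro t ht
    exact mem_aggC.mpr ⟨some e, by rw [OA_some]; exact ht⟩
  -- the statement's set equals B \ A
  have hagg : aggOA σ q (updProf ρ e Jb) I \ A = B \ A := by
    ext i
    simp only [Finset.mem_sdiff]
    constructor
    · rintro ⟨h1, h2⟩
      exact ⟨(mem_agg_upd hσ hJbA hJbI h2).mp h1, h2⟩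
    · rintro ⟨h1, h2⟩
      exact ⟨(mem_agg_upd hσ hJbA hJbI h2).mpr h1, h2⟩
  -- B \ A ⊆ Jb
  have hBJb : B \ A ⊆ Jb := by
    intro i hi
    obtain ⟨hiB, hiA⟩ := Finset.mem_sdiff.mp hi
    rcases Finset.mem_union.mp (topK_subset' σ (P ∪ Jb) (q (some e)) hiB) with hiP | h
    · exact absurd (hPA (mem_topK_of_subset Finset.subset_union_left hiP hiB)) hiA
    · exact h
  have hBA : B ∩ Jb = B \ A := by
    apply Finset.Subset.antisymm
    · intro i hi
      obtain ⟨h1, h2⟩ := Finset.mem_inter.mp hi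
      exact Finset.mem_sdiff.mpr ⟨h1, hJbA i h2⟩
    · intro i hi
      exact Finset.mem_inter.mpr ⟨(Finset.mem_sdiff.mp hi).1, hBJb hi⟩
  -- key: for B ∩ Jb ⊆ J ⊆ Jb, the new EWS pool selects exactly B
  have hkey : ∀ J : Finset ι, J ⊆ Jb → B ∩ Jb ⊆ J → topK σ (P ∪ J) (q (some e)) = B := by
    intro J hJ1 hJ2
    apply topK_eq_of_between hσ
    · intro t ht
      rcases Finset.mem_union.mp (topK_subset' σ (P ∪ Jb) (q (some e)) ht) with h | h
      · exact Finset.mem_union_left _ h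
      · exact Finset.mem_union_right _ (hJ2 (Finset.mem_inter.mpr ⟨ht, h⟩))
    · intro t ht
      rcases Finset.mem_union.mp ht with h | h
      · exact Finset.mem_union_left _ h
      · exact Finset.mem_union_right _ (hJ1 h)
  have hsubJb : ∀ {J : Finset ι}, J ⊆ Jb → (∀ j ∈ J, j ∉ A) ∧ J ⊆ I := by
    intro J h
    exact ⟨fun j hj => hJbA j (h hj), fun j hj => hJbI (h hj)⟩
  -- Suffers for B \ A
  have hsuffBA : Suffers σ q ρ e JJ I (B \ A) := by
    constructor
    · intro j hj
      exact (Finset.mem_sdiff.mp (hBJb hj)).1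
    · intro j hj
      obtain ⟨hjnA, hjI⟩ := (hsubJb hBJb)
      refine ⟨hjnA j hj, ?_⟩
      rw [mem_agg_upd hσ hjnA hjI (hjnA j hj)]
      refine mem_topK_of_subset ?_ (Finset.mem_union_right _ hj) (Finset.mem_sdiff.mp hj).1
      intro t ht
      rcases Finset.mem_union.mp ht with h | h
      · exact Finset.mem_union_left _ h
      · exact Finset.mem_union_right _ (hBJb h)
  -- maximality clause
  have hmaxBA : ∀ J' ⊆ Jb, (B \ A) ⊂ J' →
      ¬ Suffers σ q ρ e JJ I J' ∧ (B \ A) ⊆ aggOA σ q (updProf ρ e J') I := by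
    intro J' hJ' hss
    obtain ⟨hJ'nA, hJ'I⟩ := hsubJb hJ'
    have hEq : topK σ (P ∪ J') (q (some e)) = B :=
      hkey J' hJ' (hBA ▸ hss.subset)
    constructor
    · rintro ⟨hs1, hs2⟩
      obtain ⟨j, hjJ', hjBA⟩ := Finset.exists_of_ssubset hss
      obtain ⟨hjnA, hjagg⟩ := hs2 j hjJ'
      rw [mem_agg_upd hσ hJ'nA hJ'I hjnA, hEq] at hjagg
      exact hjBA (Finset.mem_sdiff.mpr ⟨hjagg, hjnA⟩)
    · intro j hj
      have hjnA := (Finset.mem_sdiff.mp hj).2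
      rw [mem_agg_upd hσ hJ'nA hJ'I hjnA, hEq]
      exact (Finset.mem_sdiff.mp hj).1
  have hmaxfull : MaximalSuffers σ q ρ e JJ I (B \ A) := by
    refine ⟨?_, hsuffBA, ?_⟩
    · rw [← hA, ← hJbdef]; exact hBJb
    · intro J' hJ'sub hss
      rw [← hA, ← hJbdef] at hJ'sub
      exact hmaxBA J' hJ'sub hss
  rw [hagg]
  refine ⟨hmaxfull, ?_⟩
  rintro J ⟨hJsub, ⟨hsJJ, hsmem⟩, hmax⟩
  rw [← hA, ← hJbdef] at hJsub hmax
  -- first: J ⊆ B \ A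
  have hJBA : J ⊆ B \ A := by
    obtain ⟨hJnA, hJI⟩ := hsubJb hJsub
    by_cases hJJb : J = Jb
    · subst hJJb
      intro j hj
      obtain ⟨hjnA, hjagg⟩ := hsmem j hj
      rw [mem_agg_upd hσ hJnA hJI hjnA] at hjagg
      exact Finset.mem_sdiff.mpr ⟨hjagg, hjnA⟩
    · have hss : J ⊂ Jb := lt_of_le_of_ne hJsub hJJb
      have h2 := (hmax Jb (Finset.Subset.refl _) hss).2
      intro j hj
      have hjnA := hJnA j hj
      have hjagg := h2 hj
      rw [mem_agg_upd hσ hJbA hJbI hjnA] at hjagg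
      exact Finset.mem_sdiff.mpr ⟨hjagg, hjnA⟩
  by_contra hne
  have hss : J ⊂ B \ A := lt_of_le_of_ne hJBA hne
  exact (hmax (B \ A) hBJb hss).1 hsuffBA
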